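/- Let K and M be real Hilbert spaces, W_pw ⊆ K and Z_pw ⊆ M finite-dimensional subspaces, and W_h ⊆ W_pw, Z_h ⊆ Z_pw subspaces. Let P¹ : W_pw → W_pw and P² : Z_pw → Z_pw be linear maps with range(P¹) ⊆ W_h, P¹ w = w for all w ∈ W_h, range(P²) ⊆ Z_h, and P² z = z for all z ∈ Z_h. Let C : W_h → Z_h be linear, and let B : Z_pw → W_pw be the linear map determined by ⟨B z, w⟩_K = ⟨z, C P¹ w⟩_M for all z ∈ Z_pw, w ∈ W_pw. Denote by Q¹ : K → W_pw and Q² : M → Z_pw the orthogonal projections, and by (P¹)*, (P²)* the adjoints of P¹, P² as operators on the finite-dimensional inner-product spaces W_pw, Z_pw. If z ∈ M and g ∈ K satisfy ⟨z, C ψ⟩_M = ⟨g, ψ⟩_K for all ψ ∈ W_h, then B((P²)* Q² z) = (P¹)* Q¹ g. -/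

import Mathlib

open scoped RealInnerProductSpace

/-- Broken-FEEC weak curl commuting relation (the curl half of
Theorem 2.2 of the paper): with broken spaces `Wpw ⊆ K`, `Zpw ⊆ M`, conforming subspaces
`Wh ⊆ Wpw`, `Zh ⊆ Zpw`, conforming projections `P¹`, `P²`, a differential operator
`C : Wh → Zh`, and `B : Zpw → Wpw` determined by `⟨B z, w⟩_K = ⟨z, C P¹ w⟩_M`,
if `⟨z, C ψ⟩_M = ⟨g, ψ⟩_K` for all `ψ ∈ Wh`, then `B ((P²)* Q² z) = (P¹)* Q¹ g`. -/
theorem stmt3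
    {K M : Type*} [NormedAddCommGroup K] [InnerProductSpace ℝ K]
    [NormedAddCommGroup M] [InnerProductSpace ℝ M]
    (Wpw : Submodule ℝ K) (Zpw : Submodule ℝ M)
    [FiniteDimensional ℝ Wpw] [FiniteDimensional ℝ Zpw]
    (Wh : Submodule ℝ Wpw) (Zh : Submodule ℝ Zpw)
    (P1 : Wpw →ₗ[ℝ] Wpw) (P2 : Zpw →ₗ[ℝ] Zpw)
    (hP1range : ∀ w, P1 w ∈ Wh) (hP1fix : ∀ w ∈ Wh, P1 w = w)
    (hP2range : ∀ z, P2 z ∈ Zh) (hP2fix : ∀ z ∈ Zh, P2 z = z)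
    (C : Wh →ₗ[ℝ] Zh) (B : Zpw →ₗ[ℝ] Wpw)
    (hB : ∀ (z : Zpw) (w : Wpw),
      ⟪((B z : Wpw) : K), ((w : Wpw) : K)⟫ =
        ⟪(z : M), ((C ⟨P1 w, hP1range w⟩ : Zpw) : M)⟫)
    (z : M) (g : K)
    (hweak : ∀ ψ : Wh, ⟪z, ((C ψ : Zpw) : M)⟫ = ⟪g, ((ψ : Wpw) : K)⟫) :
    B ((LinearMap.adjoint P2) (Submodule.orthogonalProjectionOnto Zpw z)) =
      (LinearMap.adjoint P1) (Submodule.orthogonalProjectionOnto Wpw g) := by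
  apply ext_inner_right ℝ
  intro w
  have key : ∀ (x y : Wpw), ⟪(x : K), (y : K)⟫ = ⟪x, y⟫ := fun x y => rfl
  rw [← key, hB]
  have h1 : ⟪((LinearMap.adjoint P2) (Submodule.orthogonalProjectionOnto Zpw z) : M),
      ((C ⟨P1 w, hP1range w⟩ : Zpw) : M)⟫ =
      ⟪(LinearMap.adjoint P2) (Submodule.orthogonalProjectionOnto Zpw z),
        (C ⟨P1 w, hP1range w⟩ : Zpw)⟫ := rfl
  rw [h1, LinearMap.adjoint_inner_left]
  have h2 : P2 ((C ⟨P1 w, hP1range w⟩ : Zpw)) = (C ⟨P1 w, hP1range w⟩ : Zpw) :=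
    hP2fix _ (C ⟨P1 w, hP1range w⟩).2
  rw [h2]
  have h3 : ⟪(Submodule.orthogonalProjectionOnto Zpw z : Zpw), (C ⟨P1 w, hP1range w⟩ : Zpw)⟫ =
      ⟪z, ((C ⟨P1 w, hP1range w⟩ : Zpw) : M)⟫ :=
    Submodule.inner_orthogonalProjectionOnto_eq_of_mem_right _ _
  rw [h3, hweak ⟨P1 w, hP1range w⟩]
  rw [LinearMap.adjoint_inner_left]
  have h4 : ⟪(Submodule.orthogonalProjectionOnto Wpw g : Wpw), P1 w⟫ =
      ⟪g, ((P1 w : Wpw) : K)⟫ :=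
    Submodule.inner_orthogonalProjectionOnto_eq_of_mem_right _ _
  rw [h4]
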